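/- Let k be an infinite field and P_1(a,x),…,P_s(a,x) ∈ k[a_1,…,a_m, x_1,…,x_r] (s ≥ 2, m ≥ 1, r ≥ 1) be nonzero polynomials. The following are equivalent: (i) every common divisor of P_1,…,P_s in k[a,x] belongs to k[a]; (ii) P_1,…,P_s are coprime in k(a)[x], i.e., no polynomial of positive degree in k(a)[x_1,…,x_r] divides each P_i; (iii) there exists a nonzero G ∈ k[a] such that for every a* ∈ k^m with G(a*) ≠ 0, the specialized polynomials P_1(a*,x),…,P_s(a*,x) are coprime in k[x]; (iv) there exists a Zariski-dense subset Y ⊆ k^m (meaning: for every nonzero G ∈ k[a] there is a* ∈ Y with G(a*) ≠ 0) such that for every a* ∈ Y the polynomials P_1(a*,x),…,P_s(a*,x) are coprime in k[x]. -/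

import Mathlib

open MvPolynomial

/-- The natural map `k[a,x] → k(a)[x]`, sending the variables `a_j` to the
corresponding constants of the fraction field `k(a)` and the `x_i` to themselves. -/
noncomputable def toFracField (k : Type*) [Field k] (m r : ℕ) :
    MvPolynomial (Fin m ⊕ Fin r) k →+*
      MvPolynomial (Fin r) (FractionRing (MvPolynomial (Fin m) k)) :=
  eval₂Hom
    ((C : FractionRing (MvPolynomial (Fin m) k) →+* _).comp
      ((algebraMap (MvPolynomial (Fin m) k) (FractionRing (MvPolynomial (Fin m) k))).comp
        (C : k →+* MvPolynomial (Fin m) k)))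
    (Sum.elim
      (fun j => C (algebraMap (MvPolynomial (Fin m) k)
        (FractionRing (MvPolynomial (Fin m) k)) (X j)))
      fun i => X i)

/-- Specialization `k[a,x] → k[x]`, `a ↦ a*`. -/
noncomputable def specA (k : Type*) [Field k] (m r : ℕ) (a : Fin m → k) :
    MvPolynomial (Fin m ⊕ Fin r) k →+* MvPolynomial (Fin r) k :=
  eval₂Hom (C : k →+* MvPolynomial (Fin r) k) (Sum.elim (fun j => C (a j)) fun i => X i)


open Polynomial nonZeroDivisors

lemma gauss_descend {R : Type*} [CommRing R] [IsDomain R] [UniqueFactorizationMonoid R]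
    {K : Type*} [Field K] [Algebra R K] [IsFractionRing R K]
    {ι : Type*} (q : ι → R[X])
    (D : K[X]) (hD : 0 < D.natDegree)
    (hdvd : ∀ i, D ∣ (q i).map (algebraMap R K)) :
    ∃ p : R[X], Prime p ∧ 0 < p.natDegree ∧ ∀ i, p ∣ q i := by
  classical
  letI := UniqueFactorizationMonoid.normalizationMonoid (α := R)
  letI := UniqueFactorizationMonoid.toNormalizedGCDMonoid R
  have hD0 : D ≠ 0 := by rintro rfl; simp at hD
  obtain ⟨π, hπ, hπD⟩ := WfDvdMonoid.exists_irreducible_factor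
    (Polynomial.not_isUnit_of_natDegree_pos D hD) hD0
  have hπ0 : π ≠ 0 := hπ.ne_zero
  have hπdeg : 0 < π.natDegree := by
    rcases Nat.eq_zero_or_pos π.natDegree with h | h
    · obtain ⟨c, rfl⟩ := Polynomial.natDegree_eq_zero.mp h
      exact absurd (Polynomial.isUnit_C.mpr (isUnit_iff_ne_zero.mpr
        (by rintro rfl; simp at hπ0))) hπ.not_isUnit
    · exact h
  set v := IsLocalization.integerNormalization R⁰ π with hv
  obtain ⟨b, hb⟩ := IsLocalization.integerNormalization_map_to_map R⁰ π
  rw [← algebraMap_smul K ((b : R)) π, Polynomial.smul_eq_C_mul] at hb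
  have hbK : algebraMap R K (b : R) ≠ 0 := by
    simpa using (IsFractionRing.injective R K).ne_iff.mpr (nonZeroDivisors.coe_ne_zero b)
  have hv0 : v ≠ 0 := by
    intro h
    rw [← hv, h] at hb
    simp only [Polynomial.map_zero] at hb
    exact hπ0 (by
      have := mul_eq_zero.mp hb.symm
      rcases this with h' | h'
      · exact absurd h' (by simpa using hbK)
      · exact h')
  set p := v.primPart with hp
  have hvc : v = Polynomial.C v.content * p := v.eq_C_content_mul_primPart
  have hcont0 : v.content ≠ 0 := by
    intro h; exact hv0 (Polynomial.content_eq_zero_iff.mp h)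
  -- map p is associated to π
  have hassoc : Associated (p.map (algebraMap R K)) π := by
    have h1 : Associated (v.map (algebraMap R K)) (p.map (algebraMap R K)) := by
      rw [hvc, Polynomial.map_mul, Polynomial.map_C]
      exact (associated_unit_mul_left _ _ (Polynomial.isUnit_C.mpr
        (isUnit_iff_ne_zero.mpr (by
          simpa using (IsFractionRing.injective R K).ne_iff.mpr hcont0)))).symm.symm
        |>.symm |>.symm
    have h2 : Associated (v.map (algebraMap R K)) π := by
      rw [hb]
      exact associated_unit_mul_left _ _ (Polynomial.isUnit_C.mpr (isUnit_iff_ne_zero.mpr hbK))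
    exact h1.symm.trans h2
  have hpprim : p.IsPrimitive := v.isPrimitive_primPart
  have hpirr : Irreducible p :=
    (hpprim.irreducible_iff_irreducible_map_fraction_map (K := K)).mpr (hassoc.symm.irreducible hπ)
  have hpdeg : 0 < p.natDegree := by
    have h1 : (p.map (algebraMap R K)).natDegree = p.natDegree :=
      Polynomial.natDegree_map_eq_of_injective (IsFractionRing.injective R K) p
    have h2 : (p.map (algebraMap R K)).degree = π.degree :=
      Polynomial.degree_eq_degree_of_associated hassoc
    have h3 : (p.map (algebraMap R K)).natDegree = π.natDegree := by
      unfold Polynomial.natDegree; rw [h2]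
    omega
  refine ⟨p, (UniqueFactorizationMonoid.irreducible_iff_prime).mp hpirr, hpdeg, fun i => ?_⟩
  by_cases hqi : q i = 0
  · simp [hqi]
  have hmapdvd : p.map (algebraMap R K) ∣ ((q i).primPart).map (algebraMap R K) := by
    have h1 : p.map (algebraMap R K) ∣ (q i).map (algebraMap R K) :=
      hassoc.dvd.trans (hπD.trans (hdvd i))
    have h2 : (q i).map (algebraMap R K) =
        Polynomial.C (algebraMap R K (q i).content) * ((q i).primPart).map (algebraMap R K) := by
      conv_lhs => rw [(q i).eq_C_content_mul_primPart]
      rw [Polynomial.map_mul, Polynomial.map_C]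
    rw [h2] at h1
    have hu : IsUnit (Polynomial.C (algebraMap R K (q i).content)) :=
      Polynomial.isUnit_C.mpr (isUnit_iff_ne_zero.mpr (by
        simpa using (IsFractionRing.injective R K).ne_iff.mpr
          (fun h => hqi (Polynomial.content_eq_zero_iff.mp h))))
    exact (hu.dvd_mul_left).mp h1
  exact (hpprim.dvd_of_fraction_map_dvd_fraction_map hmapdvd).trans
    (q i).primPart_dvd


lemma bezout_clear {R : Type*} [CommRing R] [IsDomain R]
    {K : Type*} [Field K] [Algebra R K] [IsFractionRing R K]
    {s : ℕ} (q : Fin s → R[X]) (hq : ∃ i, q i ≠ 0)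
    (hcop : ∀ D : K[X], (∀ i, D ∣ (q i).map (algebraMap R K)) → D.natDegree = 0) :
    ∃ (w : Fin s → R[X]) (h : R), h ≠ 0 ∧ (∑ i, w i * q i) = Polynomial.C h := by
  classical
  obtain ⟨i₀, hi₀⟩ := hq
  set I : Ideal K[X] := Ideal.span (Set.range fun i => (q i).map (algebraMap R K)) with hI
  have hprinc : Submodule.IsPrincipal I := inferInstance
  obtain ⟨g, hg⟩ := hprinc
  have hmem : ∀ i, (q i).map (algebraMap R K) ∈ I := fun i =>
    Ideal.subset_span (Set.mem_range_self i)
  have hgdvd : ∀ i, g ∣ (q i).map (algebraMap R K) := by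
    intro i
    have := hmem i
    rw [hg, Ideal.submodule_span_eq, Ideal.mem_span_singleton] at this
    exact this
  have hg0 : g ≠ 0 := by
    rintro rfl
    have := hgdvd i₀
    rw [zero_dvd_iff] at this
    exact (Polynomial.map_injective _ (IsFractionRing.injective R K)).ne_iff.mpr hi₀ (by simpa)
  have hgdeg : g.natDegree = 0 := hcop g hgdvd
  have hgu : IsUnit g := by
    obtain ⟨c, rfl⟩ := Polynomial.natDegree_eq_zero.mp hgdeg
    exact Polynomial.isUnit_C.mpr (isUnit_iff_ne_zero.mpr (by rintro rfl; simp at hg0))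
  have hItop : I = ⊤ := by
    rw [hg, Ideal.submodule_span_eq, Ideal.span_singleton_eq_top]; exact hgu
  have h1 : (1 : K[X]) ∈ I := by rw [hItop]; trivial
  rw [hI, Ideal.mem_span_range_iff_exists_fun] at h1
  obtain ⟨u, hu⟩ := h1
  -- clear denominators
  choose b hb using fun i => IsLocalization.integerNormalization_map_to_map R⁰ (u i)
  set v : Fin s → R[X] := fun i => IsLocalization.integerNormalization R⁰ (u i) with hv
  replace hb : ∀ i, (v i).map (algebraMap R K) = Polynomial.C (algebraMap R K (b i : R)) * u i :=
    fun i => by rw [hb i, ← algebraMap_smul K ((b i : R)) (u i), Polynomial.smul_eq_C_mul]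
  set h : R := ∏ i, (b i : R) with hh
  have hne : h ≠ 0 := Finset.prod_ne_zero_iff.mpr fun i _ => nonZeroDivisors.coe_ne_zero (b i)
  refine ⟨fun i => Polynomial.C (∏ l ∈ Finset.univ.erase i, (b l : R)) * v i, h, hne, ?_⟩
  apply Polynomial.map_injective _ (IsFractionRing.injective R K)
  rw [Polynomial.map_sum, Polynomial.map_C]
  have : ∀ i : Fin s, Polynomial.map (algebraMap R K)
      (Polynomial.C (∏ l ∈ Finset.univ.erase i, (b l : R)) * v i * q i)
      = Polynomial.C (algebraMap R K h) * (u i * (q i).map (algebraMap R K)) := by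
    intro i
    rw [Polynomial.map_mul, Polynomial.map_mul, Polynomial.map_C, hb i]
    rw [← mul_assoc, ← mul_assoc, ← Polynomial.C_mul, ← map_mul]
    congr 3
    rw [hh, ← Finset.prod_erase_mul _ _ (Finset.mem_univ i)]
  rw [Finset.sum_congr rfl fun i _ => this i, ← Finset.mul_sum, hu, mul_one]


noncomputable section

def phiJ (S₀ : Type*) [CommSemiring S₀] (r' : ℕ) (j : Fin (r' + 1)) :
    MvPolynomial (Fin (r' + 1)) S₀ ≃+* Polynomial (MvPolynomial (Fin r') S₀) :=
  (renameEquiv S₀ (Equiv.swap j 0)).toRingEquiv.trans (finSuccEquiv S₀ r').toRingEquiv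

lemma finSuccEquiv_C' {S₀ : Type*} [CommSemiring S₀] {r' : ℕ} (c : S₀) :
    finSuccEquiv S₀ r' (MvPolynomial.C c) = Polynomial.C (MvPolynomial.C c) := by
  simp [MvPolynomial.finSuccEquiv_apply]

@[simp] lemma phiJ_C {S₀ : Type*} [CommSemiring S₀] {r' : ℕ} (j : Fin (r' + 1)) (c : S₀) :
    phiJ S₀ r' j (MvPolynomial.C c) = Polynomial.C (MvPolynomial.C c) := by
  simp [phiJ, finSuccEquiv_C']

@[simp] lemma phiJ_X_self {S₀ : Type*} [CommSemiring S₀] {r' : ℕ} (j : Fin (r' + 1)) :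
    phiJ S₀ r' j (MvPolynomial.X j) = Polynomial.X := by
  simp [phiJ, Equiv.swap_apply_left, finSuccEquiv_X_zero]

lemma phiJ_X_ne {S₀ : Type*} [CommSemiring S₀] {r' : ℕ} (j i : Fin (r' + 1)) (w : Fin r')
    (hw : Equiv.swap j 0 i = w.succ) :
    phiJ S₀ r' j (MvPolynomial.X i) = Polynomial.C (MvPolynomial.X w) := by
  simp [phiJ, hw, finSuccEquiv_X_succ]

lemma swap_ne_zero {r' : ℕ} {j i : Fin (r' + 1)} (hij : i ≠ j) :
    ∃ w : Fin r', Equiv.swap j 0 i = w.succ := by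
  have h0 : Equiv.swap j 0 i ≠ 0 := by
    intro h
    apply hij
    have := (Equiv.swap j 0).injective (a₁ := i) (a₂ := j)
    exact this (by rw [h, Equiv.swap_apply_left])
  exact ⟨(Equiv.swap j 0 i).pred h0, by simp⟩

lemma phiJ_natDegree {S₀ : Type*} [CommSemiring S₀] {r' : ℕ} (j : Fin (r' + 1))
    (p : MvPolynomial (Fin (r' + 1)) S₀) :
    (phiJ S₀ r' j p).natDegree = degreeOf j p := by
  show ((finSuccEquiv S₀ r') (rename (Equiv.swap j 0) p)).natDegree = degreeOf j p
  rw [natDegree_finSuccEquiv]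
  have := degreeOf_rename_of_injective (p := p) (f := ⇑(Equiv.swap j 0)) (Equiv.injective _) j
  rwa [Equiv.swap_apply_left] at this

def Theta (k : Type*) [CommSemiring k] (m n : ℕ) :
    MvPolynomial (Fin m ⊕ Fin n) k ≃+* MvPolynomial (Fin n) (MvPolynomial (Fin m) k) :=
  (renameEquiv k (Equiv.sumComm (Fin m) (Fin n))).toRingEquiv.trans
    (sumAlgEquiv k (Fin n) (Fin m)).toRingEquiv

@[simp] lemma Theta_C {k : Type*} [CommSemiring k] {m n : ℕ} (c : k) :
    Theta k m n (MvPolynomial.C c) = MvPolynomial.C (MvPolynomial.C c) := by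
  simp [Theta, sumAlgEquiv_C_inl]

@[simp] lemma Theta_X_inl {k : Type*} [CommSemiring k] {m n : ℕ} (t : Fin m) :
    Theta k m n (MvPolynomial.X (Sum.inl t)) = MvPolynomial.C (MvPolynomial.X t) := by
  simp [Theta, sumAlgEquiv_X_inr]

@[simp] lemma Theta_X_inr {k : Type*} [CommSemiring k] {m n : ℕ} (i : Fin n) :
    Theta k m n (MvPolynomial.X (Sum.inr i)) = MvPolynomial.X i := by
  simp [Theta, sumAlgEquiv_X_inl]

def Psi (k : Type*) [CommSemiring k] (m r' : ℕ) (j : Fin (r' + 1)) :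
    MvPolynomial (Fin m ⊕ Fin (r' + 1)) k ≃+*
      Polynomial (MvPolynomial (Fin r') (MvPolynomial (Fin m) k)) :=
  (Theta k m (r' + 1)).trans (phiJ (MvPolynomial (Fin m) k) r' j)

@[simp] lemma Psi_C {k : Type*} [CommSemiring k] {m r' : ℕ} (j : Fin (r' + 1)) (c : k) :
    Psi k m r' j (MvPolynomial.C c) = Polynomial.C (MvPolynomial.C (MvPolynomial.C c)) := by simp [Psi]

@[simp] lemma Psi_X_inl {k : Type*} [CommSemiring k] {m r' : ℕ} (j : Fin (r' + 1)) (t : Fin m) :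
    Psi k m r' j (MvPolynomial.X (Sum.inl t)) = Polynomial.C (MvPolynomial.C (MvPolynomial.X t)) := by simp [Psi]

@[simp] lemma Psi_X_inr_self {k : Type*} [CommSemiring k] {m r' : ℕ} (j : Fin (r' + 1)) :
    Psi k m r' j (MvPolynomial.X (Sum.inr j)) = Polynomial.X := by simp [Psi]

lemma Psi_X_inr_ne {k : Type*} [CommSemiring k] {m r' : ℕ} (j i : Fin (r' + 1)) (w : Fin r')
    (hw : Equiv.swap j 0 i = w.succ) :
    Psi k m r' j (MvPolynomial.X (Sum.inr i)) = Polynomial.C (MvPolynomial.X w) := by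
  simp [Psi, phiJ_X_ne j i w hw]

end

noncomputable section Diagrams
variable (k : Type*) [Field k] (m r' : ℕ)

-- generator values of toFracField and specA
@[simp] lemma toFracField_C (c : k) (r : ℕ) :
    toFracField k m r (MvPolynomial.C c) =
      MvPolynomial.C (algebraMap (MvPolynomial (Fin m) k)
        (FractionRing (MvPolynomial (Fin m) k)) (MvPolynomial.C c)) := by
  simp [toFracField]

@[simp] lemma toFracField_X_inl (t : Fin m) (r : ℕ) :
    toFracField k m r (MvPolynomial.X (Sum.inl t)) =
      MvPolynomial.C (algebraMap (MvPolynomial (Fin m) k)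
        (FractionRing (MvPolynomial (Fin m) k)) (MvPolynomial.X t)) := by
  simp [toFracField]

@[simp] lemma toFracField_X_inr (r : ℕ) (i : Fin r) :
    toFracField k m r (MvPolynomial.X (Sum.inr i)) = MvPolynomial.X i := by
  simp [toFracField]

@[simp] lemma specA_C (a : Fin m → k) (c : k) (r : ℕ) :
    specA k m r a (MvPolynomial.C c) = MvPolynomial.C c := by simp [specA]

@[simp] lemma specA_X_inl (a : Fin m → k) (t : Fin m) (r : ℕ) :
    specA k m r a (MvPolynomial.X (Sum.inl t)) = MvPolynomial.C (a t) := by simp [specA]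

@[simp] lemma specA_X_inr (a : Fin m → k) (r : ℕ) (i : Fin r) :
    specA k m r a (MvPolynomial.X (Sum.inr i)) = MvPolynomial.X i := by simp [specA]

end Diagrams

noncomputable section MoreDiagrams
variable (k : Type*) [Field k] (m r' : ℕ)

local notation "Ak" => MvPolynomial (Fin m) k
local notation "Kk" => FractionRing (MvPolynomial (Fin m) k)

lemma diagram1 (j : Fin (r' + 1)) :
    (Polynomial.mapRingHom (MvPolynomial.map (algebraMap Ak Kk))).comp
        (Psi k m r' j).toRingHom
      = (phiJ Kk r' j).toRingHom.comp (toFracField k m (r' + 1)) := by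
  apply MvPolynomial.ringHom_ext
  · intro c; simp
  · rintro (t | i)
    · simp
    · rcases eq_or_ne i j with rfl | hij
      · simp
      · obtain ⟨w, hw⟩ := swap_ne_zero hij
        simp [Psi_X_inr_ne j i w hw, phiJ_X_ne j i w hw]

lemma diagram2 (a : Fin m → k) (j : Fin (r' + 1)) :
    (phiJ k r' j).toRingHom.comp (specA k m (r' + 1) a)
      = (Polynomial.mapRingHom (MvPolynomial.map (MvPolynomial.eval a : Ak →+* k))).comp
        (Psi k m r' j).toRingHom := by
  apply MvPolynomial.ringHom_ext
  · intro c; simp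
  · rintro (t | i)
    · simp
    · rcases eq_or_ne i j with rfl | hij
      · simp
      · obtain ⟨w, hw⟩ := swap_ne_zero hij
        simp [Psi_X_inr_ne j i w hw, phiJ_X_ne j i w hw]

lemma diagram3 (j : Fin (r' + 1)) (E : Ak) :
    Psi k m r' j (rename Sum.inl E) = Polynomial.C (MvPolynomial.C E) := by
  have : ((Psi k m r' j : MvPolynomial (Fin m ⊕ Fin (r' + 1)) k →+* _)).comp
        ((rename Sum.inl : Ak →ₐ[k] MvPolynomial (Fin m ⊕ Fin (r' + 1)) k) : Ak →+* _)
      = (Polynomial.C.comp (MvPolynomial.C : Ak →+* MvPolynomial (Fin r') Ak)) := by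
    apply MvPolynomial.ringHom_ext
    · intro c; simp
    · intro t; simp
  exact congrFun (congrArg (fun f => f.toFun) this) E

lemma diagram4 (a : Fin m → k) (n : ℕ) :
    specA k m n a
      = (MvPolynomial.map (MvPolynomial.eval a : Ak →+* k)).comp
        (Theta k m n).toRingHom := by
  apply MvPolynomial.ringHom_ext
  · intro c; simp
  · rintro (t | i) <;> simp

lemma diagram5 (n : ℕ) (E : Ak) :
    Theta k m n (rename Sum.inl E) = MvPolynomial.C E := by
  have : ((Theta k m n : MvPolynomial (Fin m ⊕ Fin n) k →+* _)).comp
        ((rename Sum.inl : Ak →ₐ[k] MvPolynomial (Fin m ⊕ Fin n) k) : Ak →+* _)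
      = (MvPolynomial.C : Ak →+* MvPolynomial (Fin n) Ak) := by
    apply MvPolynomial.ringHom_ext
    · intro c; simp
    · intro t; simp
  exact congrFun (congrArg (fun f => f.toFun) this) E

end MoreDiagrams

set_option maxHeartbeats 1000000
set_option synthInstance.maxHeartbeats 400000

noncomputable section FracSetup
variable (k : Type*) [Field k] (m r' : ℕ)

local notation "Ak" => MvPolynomial (Fin m) k
local notation "Kk" => FractionRing (MvPolynomial (Fin m) k)
local notation "Rr" => MvPolynomial (Fin r') (MvPolynomial (Fin m) k)
local notation "Ss" => MvPolynomial (Fin r') (FractionRing (MvPolynomial (Fin m) k))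

lemma C_mem_nonZeroDivisors {a : Ak} (ha : a ∈ nonZeroDivisors Ak) :
    (MvPolynomial.C a : Rr) ∈ nonZeroDivisors Rr :=
  mem_nonZeroDivisors_iff_ne_zero.mpr (by
    rw [Ne, MvPolynomial.C_eq_zero]
    exact mem_nonZeroDivisors_iff_ne_zero.mp ha)

/-- The canonical embedding `k(a)[x'] → Frac (k[a][x'])`. -/
def chiRS : Ss →+* FractionRing Rr := by
  letI : Algebra Rr Ss := algebraMvPolynomial
  haveI loc1 : IsLocalization
      (Submonoid.map (MvPolynomial.C : Ak →+* Rr) (nonZeroDivisors Ak)) Ss :=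
    MvPolynomial.isLocalization _ _
  exact IsLocalization.lift (M := Submonoid.map (MvPolynomial.C : Ak →+* Rr) (nonZeroDivisors Ak))
    (g := algebraMap Rr (FractionRing Rr))
    (by
      rintro ⟨y, a, ha, rfl⟩
      exact IsLocalization.map_units (M := nonZeroDivisors Rr) (FractionRing Rr)
        ⟨MvPolynomial.C a, C_mem_nonZeroDivisors k m r' ha⟩)

lemma chiRS_comp :
    (chiRS k m r').comp (MvPolynomial.map (algebraMap Ak Kk) : Rr →+* Ss)
      = algebraMap Rr (FractionRing Rr) := by
  letI : Algebra Rr Ss := algebraMvPolynomial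
  haveI loc1 : IsLocalization
      (Submonoid.map (MvPolynomial.C : Ak →+* Rr) (nonZeroDivisors Ak)) Ss :=
    MvPolynomial.isLocalization _ _
  exact IsLocalization.lift_comp _

lemma chiRS_apply_map (p : Rr) :
    chiRS k m r' (MvPolynomial.map (algebraMap Ak Kk) p) = algebraMap Rr (FractionRing Rr) p :=
  congrFun (congrArg (fun f => f.toFun) (chiRS_comp k m r')) p

lemma chiRS_injective : Function.Injective (chiRS k m r') := by
  letI : Algebra Rr Ss := algebraMvPolynomial
  haveI loc1 : IsLocalization
      (Submonoid.map (MvPolynomial.C : Ak →+* Rr) (nonZeroDivisors Ak)) Ss :=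
    MvPolynomial.isLocalization _ _
  suffices h : ∀ w : Ss, chiRS k m r' w = 0 → w = 0 by
    intro u v huv
    exact sub_eq_zero.mp (h (u - v) (by rw [map_sub, huv, sub_self]))
  intro u huv
  obtain ⟨⟨u₀, d⟩, hu⟩ := IsLocalization.surj
    (M := Submonoid.map (MvPolynomial.C : Ak →+* Rr) (nonZeroDivisors Ak)) u
  have happ : chiRS k m r' (u * algebraMap Rr Ss (d : Rr)) = algebraMap Rr (FractionRing Rr) u₀ := by
    rw [hu]; exact chiRS_apply_map k m r' u₀
  rw [map_mul, huv, zero_mul] at happ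
  have hu₀ : u₀ = 0 := IsFractionRing.injective Rr (FractionRing Rr) (by rw [← happ, map_zero])
  rw [hu₀, map_zero] at hu
  have hd : algebraMap Rr Ss (d : Rr) ≠ 0 := by
    obtain ⟨a, ha, hda⟩ := d.2
    rw [← hda]
    show MvPolynomial.map (algebraMap Ak Kk) (MvPolynomial.C a) ≠ 0
    rw [MvPolynomial.map_C, Ne, MvPolynomial.C_eq_zero]
    exact fun h => mem_nonZeroDivisors_iff_ne_zero.mp ha
      ((IsFractionRing.injective Ak Kk) (by rw [h, map_zero]))
  exact (mul_eq_zero.mp hu).resolve_right hd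

end FracSetup

noncomputable section Descend
variable (k : Type*) [Field k] (m r' : ℕ)

local notation "Ak" => MvPolynomial (Fin m) k
local notation "Kk" => FractionRing (MvPolynomial (Fin m) k)
local notation "Rr" => MvPolynomial (Fin r') (MvPolynomial (Fin m) k)
local notation "Tt" => MvPolynomial (Fin m ⊕ Fin (r' + 1)) k
local notation "Bb" => MvPolynomial (Fin (r' + 1)) (FractionRing (MvPolynomial (Fin m) k))

lemma dvd_map_algebraMap_of_dvd_toFracField {s : ℕ} (Q : Fin s → Tt) (j : Fin (r' + 1))
    (D : Bb) (hdvd : ∀ i, D ∣ toFracField k m (r' + 1) (Q i)) (i : Fin s) :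
    ((phiJ Kk r' j D).map (chiRS k m r')) ∣
      (Psi k m r' j (Q i)).map (algebraMap Rr (FractionRing Rr)) := by
  have h1 : phiJ Kk r' j D ∣ phiJ Kk r' j (toFracField k m (r' + 1) (Q i)) := by
    obtain ⟨c, hc⟩ := hdvd i
    exact ⟨phiJ Kk r' j c, by rw [hc, RingEquiv.map_mul]⟩
  have h2 : phiJ Kk r' j (toFracField k m (r' + 1) (Q i))
      = (Psi k m r' j (Q i)).map (MvPolynomial.map (algebraMap Ak Kk)) := by
    have := diagram1 k m r' j
    have happ := congrFun (congrArg (fun f => f.toFun) this) (Q i)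
    exact happ.symm
  rw [h2] at h1
  have h3 := Polynomial.map_dvd (chiRS k m r') h1
  rwa [Polynomial.map_map, chiRS_comp] at h3

lemma descend_common_divisor {s : ℕ} (Q : Fin s → Tt) (j : Fin (r' + 1))
    (D : Bb) (hj : 0 < MvPolynomial.degreeOf j D)
    (hdvd : ∀ i, D ∣ toFracField k m (r' + 1) (Q i)) :
    ∃ p : Tt, (∀ i, p ∣ Q i) ∧ ∀ E : Ak, p ≠ rename Sum.inl E := by
  have hdeg : 0 < ((phiJ Kk r' j D).map (chiRS k m r')).natDegree := by
    rw [Polynomial.natDegree_map_eq_of_injective (chiRS_injective k m r'), phiJ_natDegree]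
    exact hj
  obtain ⟨p, hp, hpdeg, hpdvd⟩ := gauss_descend (fun i => Psi k m r' j (Q i))
    ((phiJ Kk r' j D).map (chiRS k m r')) hdeg
    (dvd_map_algebraMap_of_dvd_toFracField k m r' Q j D hdvd)
  refine ⟨(Psi k m r' j).symm p, fun i => ?_, fun E hE => ?_⟩
  · have := map_dvd (Psi k m r' j).symm (hpdvd i)
    rwa [RingEquiv.symm_apply_apply] at this
  · have : p = Polynomial.C (MvPolynomial.C E) := by
      rw [← diagram3 k m r' j E, ← hE, RingEquiv.apply_symm_apply]
    rw [this] at hpdeg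
    simp at hpdeg

lemma coprime_in_KrX {s : ℕ} (Q : Fin s → Tt) (j : Fin (r' + 1))
    (hcop : ∀ D : Bb, (∀ i, D ∣ toFracField k m (r' + 1) (Q i)) → D.totalDegree = 0)
    (D' : Polynomial (FractionRing Rr))
    (hdvd : ∀ i, D' ∣ (Psi k m r' j (Q i)).map (algebraMap Rr (FractionRing Rr))) :
    D'.natDegree = 0 := by
  by_contra hne
  obtain ⟨p, hp, hpdeg, hpdvd⟩ := gauss_descend (fun i => Psi k m r' j (Q i)) D'
    (Nat.pos_of_ne_zero hne) hdvd
  set Dbad : Bb := (phiJ Kk r' j).symm (p.map (MvPolynomial.map (algebraMap Ak Kk))) with hDbad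
  have hdvd' : ∀ i, Dbad ∣ toFracField k m (r' + 1) (Q i) := by
    intro i
    have h1 : p.map (MvPolynomial.map (algebraMap Ak Kk)) ∣
        (Psi k m r' j (Q i)).map (MvPolynomial.map (algebraMap Ak Kk)) :=
      Polynomial.map_dvd _ (hpdvd i)
    have h2 : (Psi k m r' j (Q i)).map (MvPolynomial.map (algebraMap Ak Kk))
        = phiJ Kk r' j (toFracField k m (r' + 1) (Q i)) :=
      congrFun (congrArg (fun f => f.toFun) (diagram1 k m r' j)) (Q i)
    rw [h2] at h1
    have := map_dvd (phiJ Kk r' j).symm h1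
    rwa [RingEquiv.symm_apply_apply] at this
  have hdeg : 0 < MvPolynomial.degreeOf j Dbad := by
    have h0 : phiJ Kk r' j Dbad = p.map (MvPolynomial.map (algebraMap Ak Kk)) := by
      rw [hDbad, RingEquiv.apply_symm_apply]
    have hnd : (phiJ Kk r' j Dbad).natDegree = MvPolynomial.degreeOf j Dbad :=
      phiJ_natDegree j Dbad
    rw [h0, Polynomial.natDegree_map_eq_of_injective
      (MvPolynomial.map_injective _ (IsFractionRing.injective Ak Kk))] at hnd
    omega
  have htd := hcop Dbad hdvd'
  have hle := MvPolynomial.degreeOf_le_totalDegree Dbad j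
  rw [htd] at hle
  omega

lemma exists_certificate {s : ℕ} (Q : Fin s → Tt) (j : Fin (r' + 1))
    (hQ0 : ∃ i, Q i ≠ 0)
    (hcop : ∀ D : Bb, (∀ i, D ∣ toFracField k m (r' + 1) (Q i)) → D.totalDegree = 0) :
    ∃ (W : Fin s → Tt) (h : Rr), h ≠ 0 ∧
      ∑ i, W i * Q i = (Psi k m r' j).symm (Polynomial.C h) := by
  obtain ⟨w, h, hne, hsum⟩ := bezout_clear (K := FractionRing Rr)
    (fun i => Psi k m r' j (Q i))
    (by obtain ⟨i, hi⟩ := hQ0; exact ⟨i, fun hz => hi ((Psi k m r' j).map_eq_zero_iff.mp hz)⟩)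
    (fun D' hdvd => coprime_in_KrX k m r' Q j hcop D' hdvd)
  refine ⟨fun i => (Psi k m r' j).symm (w i), h, hne, ?_⟩
  apply (Psi k m r' j).injective
  rw [map_sum, RingEquiv.apply_symm_apply]
  rw [← hsum]
  congr 1
  ext i
  rw [map_mul, RingEquiv.apply_symm_apply]

end Descend

section Helpers
variable {σ R : Type*} [CommSemiring R]

lemma le_degreeOf' {p : MvPolynomial σ R} {t : σ →₀ ℕ} (ht : t ∈ p.support) (j : σ) :
    t j ≤ MvPolynomial.degreeOf j p := by
  rw [MvPolynomial.degreeOf_eq_sup]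
  exact Finset.le_sup (f := fun t => t j) ht

lemma exists_degreeOf_pos {p : MvPolynomial σ R} (h : p.totalDegree ≠ 0) :
    ∃ j, 0 < MvPolynomial.degreeOf j p := by
  rw [Ne, MvPolynomial.totalDegree_eq_zero_iff] at h
  push_neg at h
  obtain ⟨t, ht, j, hj⟩ := h
  exact ⟨j, lt_of_lt_of_le (Nat.pos_of_ne_zero hj) (le_degreeOf' ht j)⟩

lemma exists_support_pos_coord {p : MvPolynomial σ R} {j : σ}
    (h : 0 < MvPolynomial.degreeOf j p) : ∃ t ∈ p.support, 0 < t j := by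
  by_contra hc
  push_neg at hc
  have : MvPolynomial.degreeOf j p = 0 := by
    rw [MvPolynomial.degreeOf_eq_sup]
    exact Nat.le_zero.mp ((Finset.sup_le fun t ht => (hc t ht : t j ≤ 0)) :
      (p.support.sup fun t => t j) ≤ 0)
  omega

lemma eq_C_of_totalDegree_eq_zero {p : MvPolynomial σ R} (h : p.totalDegree = 0) :
    p = MvPolynomial.C (MvPolynomial.coeff 0 p) := by
  classical
  ext t
  rcases eq_or_ne t 0 with rfl | hts
  · simp
  · rw [MvPolynomial.coeff_C, if_neg (Ne.symm hts)]
    by_contra hne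
    rw [MvPolynomial.totalDegree_eq_zero_iff] at h
    apply hts
    ext x
    exact h t (MvPolynomial.mem_support_iff.mpr hne) x

end Helpers

lemma exists_eval_ne_zero' {k : Type*} [Field k] [Infinite k] {m : ℕ}
    {G : MvPolynomial (Fin m) k} (hG : G ≠ 0) : ∃ a : Fin m → k, MvPolynomial.eval a G ≠ 0 := by
  by_contra hc
  push_neg at hc
  exact hG (MvPolynomial.funext (q := 0) (fun x => by rw [hc x, map_zero]))

theorem stmt11 (k : Type*) [Field k] [Infinite k] (s m r : ℕ)
    (hs : 2 ≤ s) (hm : 1 ≤ m) (hr : 1 ≤ r)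
    (P : Fin s → MvPolynomial (Fin m ⊕ Fin r) k)
    (hP : ∀ i, P i ≠ 0) :
    List.TFAE
      [ (∀ D : MvPolynomial (Fin m ⊕ Fin r) k, (∀ i, D ∣ P i) →
          ∃ E : MvPolynomial (Fin m) k, D = rename Sum.inl E),
        (∀ D : MvPolynomial (Fin r) (FractionRing (MvPolynomial (Fin m) k)),
          (∀ i, D ∣ toFracField k m r (P i)) → D.totalDegree = 0),
        (∃ G : MvPolynomial (Fin m) k, G ≠ 0 ∧
          ∀ a : Fin m → k, eval a G ≠ 0 →
            ∀ D : MvPolynomial (Fin r) k,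
              (∀ i, D ∣ specA k m r a (P i)) → D.totalDegree = 0),
        (∃ Y : Set (Fin m → k),
          (∀ G : MvPolynomial (Fin m) k, G ≠ 0 → ∃ a ∈ Y, eval a G ≠ 0) ∧
          ∀ a ∈ Y, ∀ D : MvPolynomial (Fin r) k,
            (∀ i, D ∣ specA k m r a (P i)) → D.totalDegree = 0) ] := by
  classical
  obtain ⟨r', rfl⟩ : ∃ r', r = r' + 1 := ⟨r - 1, by omega⟩
  tfae_have 1 → 2 := by
    intro h1 D hdvd
    by_contra hne
    obtain ⟨j, hj⟩ := exists_degreeOf_pos hne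
    obtain ⟨p, hpdvd, hpne⟩ := descend_common_divisor k m r' P j D hj hdvd
    obtain ⟨E, hE⟩ := h1 p hpdvd
    exact hpne E hE
  tfae_have 2 → 3 := by
    intro h2
    have cert := fun j : Fin (r' + 1) =>
      exists_certificate k m r' P j ⟨⟨0, by omega⟩, hP _⟩ h2
    choose W h hne hsum using cert
    have hsupp : ∀ j, (h j).support.Nonempty := fun j =>
      Finset.nonempty_iff_ne_empty.mpr (fun hempty => hne j
        (MvPolynomial.support_eq_empty.mp hempty))
    choose t₀ ht₀ using hsupp
    refine ⟨∏ j, MvPolynomial.coeff (t₀ j) (h j),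
      Finset.prod_ne_zero_iff.mpr (fun j _ => MvPolynomial.mem_support_iff.mp (ht₀ j)), ?_⟩
    intro a ha D hdvd
    by_contra htne
    obtain ⟨j, hj⟩ := exists_degreeOf_pos htne
    have hHdvd : D ∣ specA k m (r' + 1) a ((Psi k m r' j).symm (Polynomial.C (h j))) := by
      rw [← hsum j, map_sum]
      exact Finset.dvd_sum fun i _ => by rw [map_mul]; exact Dvd.dvd.mul_left (hdvd i) _
    have hcomp : phiJ k r' j (specA k m (r' + 1) a ((Psi k m r' j).symm (Polynomial.C (h j))))
        = Polynomial.C (MvPolynomial.map (MvPolynomial.eval a : MvPolynomial (Fin m) k →+* k)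
            (h j)) := by
      have hd2 := RingHom.congr_fun (diagram2 k m r' a j)
        ((Psi k m r' j).symm (Polynomial.C (h j)))
      simp only [RingHom.comp_apply, RingEquiv.toRingHom_eq_coe, RingHom.coe_coe,
        RingEquiv.coe_toRingHom, RingEquiv.apply_symm_apply,
        Polynomial.coe_mapRingHom, Polynomial.map_C] at hd2
      exact hd2
    have hC0 : MvPolynomial.map (MvPolynomial.eval a : MvPolynomial (Fin m) k →+* k)
        (h j) ≠ 0 := by
      intro h0
      have hz : MvPolynomial.eval a (MvPolynomial.coeff (t₀ j) (h j)) = 0 := by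
        rw [← MvPolynomial.coeff_map, h0, MvPolynomial.coeff_zero]
      exact ha (by rw [map_prod]; exact Finset.prod_eq_zero (Finset.mem_univ j) hz)
    have hdvd2 := map_dvd (phiJ k r' j) hHdvd
    rw [hcomp] at hdvd2
    have hle := Polynomial.natDegree_le_of_dvd hdvd2 (by
      intro hCz
      exact hC0 (by simpa using hCz))
    rw [phiJ_natDegree, Polynomial.natDegree_C] at hle
    omega
  tfae_have 3 → 4 := by
    rintro ⟨G, hG, hprop⟩
    refine ⟨{a | MvPolynomial.eval a G ≠ 0}, ?_, fun a ha => hprop a ha⟩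
    intro G' hG'
    obtain ⟨a, ha⟩ := exists_eval_ne_zero' (mul_ne_zero hG hG')
    rw [map_mul] at ha
    exact ⟨a, fun h0 => ha (by rw [h0, zero_mul]), fun h0 => ha (by rw [h0, mul_zero])⟩
  tfae_have 4 → 1 := by
    rintro ⟨Y, hdense, hY⟩ D hdvd
    by_cases htd : (Theta k m (r' + 1) D).totalDegree = 0
    · refine ⟨MvPolynomial.coeff 0 (Theta k m (r' + 1) D), ?_⟩
      apply (Theta k m (r' + 1)).injective
      rw [diagram5]
      exact eq_C_of_totalDegree_eq_zero htd
    · exfalso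
      obtain ⟨j, hj⟩ := exists_degreeOf_pos htd
      obtain ⟨t₁, ht₁, htj⟩ := exists_support_pos_coord hj
      obtain ⟨a, haY, hac⟩ := hdense _ (MvPolynomial.mem_support_iff.mp ht₁)
      have hspec : specA k m (r' + 1) a D
          = MvPolynomial.map (MvPolynomial.eval a : MvPolynomial (Fin m) k →+* k)
              (Theta k m (r' + 1) D) := by
        have := RingHom.congr_fun (diagram4 k m a (r' + 1)) D
        simpa using this
      have h0 := hY a haY _ (fun i => map_dvd (specA k m (r' + 1) a) (hdvd i))
      have hmem : t₁ ∈ (MvPolynomial.map (MvPolynomial.eval a :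
          MvPolynomial (Fin m) k →+* k) (Theta k m (r' + 1) D)).support :=
        MvPolynomial.mem_support_iff.mpr (by rw [MvPolynomial.coeff_map]; exact hac)
      have hdeg : 0 < MvPolynomial.degreeOf j (specA k m (r' + 1) a D) := by
        rw [hspec]
        exact lt_of_lt_of_le htj (le_degreeOf' hmem j)
      have hle := MvPolynomial.degreeOf_le_totalDegree (specA k m (r' + 1) a D) j
      omega
  tfae_finish
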